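/- Let T > 0, σ ∈ ℕ, p ∈ [1,∞), and let P ⊆ ℝ_{≥0}^σ be a polytope (P = conv(F) for a finite set F ⊆ ℝ_{≥0}^σ). For b ∈ {0,1} and 0 ≤ t₁ ≤ … ≤ t_σ, let u_{b;t₁,…,t_σ} : [0,∞) → {0,1} be defined by u_{b;t₁,…,t_σ}(t) = b if |{i : t_i ≤ t}| is even and 1 − b otherwise, and let D_P ⊆ L^p(0,T) be the set of all u such that u = u_{b;t₁,…,t_σ} almost everywhere on (0,T) for some b ∈ {0,1} and some sorted (t₁,…,t_σ) ∈ P. Let I₁,…,I_M be pairwise disjoint nonempty bounded open subintervals of (0,T) and define Π : L^p(0,T) → ℝ^M by Π(u)_i = (1/λ(I_i)) ∫_{I_i} u dλ. Then C_{D_P,Π} := conv{Π(u) : u ∈ D_P} is a polytope in ℝ^M, i.e., there exists a finite set F' ⊆ ℝ^M with C_{D_P,Π} = conv(F'). -/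

import Mathlib

open MeasureTheory Set Filter
open scoped ENNReal

/-- The parametrized binary step function `u_{b;t₁,…,t_σ}`: it takes the value
`b` at `x` if the number of switching points `t_i ≤ x` is even, and `1 - b`
otherwise. -/
noncomputable def switchFun (σ : ℕ) (b : ℝ) (t : Fin σ → ℝ) : ℝ → ℝ :=
  fun x => if Even ((Finset.univ.filter fun i => t i ≤ x).card) then b else 1 - b

set_option linter.unusedSectionVars false
set_option maxHeartbeats 1000000



section Cut
variable {E : Type*} [AddCommGroup E] [Module ℝ E]
variable {ℓ : E →ₗ[ℝ] ℝ} {c : ℝ} {F : Finset E}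

noncomputable def cutPt (ℓ : E →ₗ[ℝ] ℝ) (c : ℝ) (x y : E) : E :=
  (1 - (c - ℓ x) / (ℓ y - ℓ x)) • x + ((c - ℓ x) / (ℓ y - ℓ x)) • y

open Classical in
noncomputable def cutSet (ℓ : E →ₗ[ℝ] ℝ) (c : ℝ) (F : Finset E) : Finset E :=
  F.filter (fun x => ℓ x ≤ c) ∪
    ((F ×ˢ F).filter (fun p => ℓ p.1 < c ∧ c < ℓ p.2)).image
      (fun p => cutPt ℓ c p.1 p.2)

theorem lin_cutPt {x y : E} (hx : ℓ x < c) (hy : c < ℓ y) : ℓ (cutPt ℓ c x y) = c := by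
  have hne : ℓ y - ℓ x ≠ 0 := by nlinarith
  simp only [cutPt, map_add, _root_.map_smul, smul_eq_mul]
  field_simp
  ring

theorem mem_cutSet_left {x : E} (hx : x ∈ F) (hlx : ℓ x ≤ c) : x ∈ cutSet ℓ c F := by
  classical
  rw [cutSet, Finset.mem_union]
  exact Or.inl (Finset.mem_filter.mpr ⟨hx, hlx⟩)

theorem mem_cutSet_pair {x y : E} (hx : x ∈ F) (hy : y ∈ F) (hlx : ℓ x < c)
    (hly : c < ℓ y) : cutPt ℓ c x y ∈ cutSet ℓ c F := by
  classical
  rw [cutSet, Finset.mem_union]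
  refine Or.inr (Finset.mem_image.mpr ⟨(x, y), ?_, rfl⟩)
  exact Finset.mem_filter.mpr ⟨Finset.mem_product.mpr ⟨hx, hy⟩, hlx, hly⟩


theorem cutPt_mem_segment {x y : E} (hx : ℓ x < c) (hy : c < ℓ y) :
    cutPt ℓ c x y ∈ segment ℝ x y := by
  have h0 : 0 < (c - ℓ x) / (ℓ y - ℓ x) := div_pos (by linarith) (by linarith)
  have h1 : (c - ℓ x) / (ℓ y - ℓ x) < 1 := by
    rw [div_lt_one (by linarith)]; linarith
  exact ⟨1 - (c - ℓ x) / (ℓ y - ℓ x), (c - ℓ x) / (ℓ y - ℓ x),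
    by linarith, le_of_lt h0, by ring, rfl⟩

theorem cutSet_subset_hull : (cutSet ℓ c F : Set E) ⊆ convexHull ℝ (F : Set E) := by
  classical
  intro x hx
  rw [cutSet, Finset.coe_union, Set.mem_union] at hx
  rcases hx with hx | hx
  · rw [Finset.mem_coe, Finset.mem_filter] at hx
    exact subset_convexHull ℝ _ hx.1
  · rw [Finset.coe_image, Set.mem_image] at hx
    obtain ⟨p, hp, rfl⟩ := hx
    rw [Finset.mem_coe, Finset.mem_filter] at hp
    obtain ⟨hpF, h1, h2⟩ := hp
    have hseg := cutPt_mem_segment (ℓ := ℓ) h1 h2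
    rw [Finset.mem_product] at hpF
    have h2' := segment_subset_convexHull
      (subset_convexHull ℝ (↑F : Set E) (Finset.mem_coe.mpr hpF.1))
      (subset_convexHull ℝ (↑F : Set E) (Finset.mem_coe.mpr hpF.2)) hseg
    rwa [(convex_convexHull ℝ (↑F : Set E)).convexHull_eq] at h2'

theorem mem_of_cutSet {x : E} (hx : x ∈ cutSet ℓ c F) : x ∈ F ∨ ℓ x = c := by
  classical
  rw [cutSet, Finset.mem_union] at hx
  rcases hx with hx | hx
  · exact Or.inl (Finset.mem_filter.mp hx).1
  · obtain ⟨p, hp, rfl⟩ := Finset.mem_image.mp hx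
    obtain ⟨-, h1, h2⟩ := Finset.mem_filter.mp hp
    exact Or.inr (lin_cutPt h1 h2)

theorem lin_le_of_cutSet {x : E} (hx : x ∈ cutSet ℓ c F) : ℓ x ≤ c := by
  classical
  rw [cutSet, Finset.mem_union] at hx
  rcases hx with hx | hx
  · exact (Finset.mem_filter.mp hx).2
  · obtain ⟨p, hp, rfl⟩ := Finset.mem_image.mp hx
    obtain ⟨-, h1, h2⟩ := Finset.mem_filter.mp hp
    exact le_of_eq (lin_cutPt h1 h2)

theorem sum1_eq (w : E →₀ ℝ) :
    Finsupp.linearCombination ℝ (fun _ : E => (1:ℝ)) w = ∑ x ∈ w.support, w x := by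
  rw [Finsupp.linearCombination_apply, Finsupp.sum]
  simp

theorem lin_L (ℓ : E →ₗ[ℝ] ℝ) (w : E →₀ ℝ) :
    ℓ (Finsupp.linearCombination ℝ (id : E → E) w) = ∑ x ∈ w.support, w x * ℓ x := by
  rw [Finsupp.linearCombination_apply, Finsupp.sum, map_sum]
  simp [smul_eq_mul]

theorem cut_terminal (w : E →₀ ℝ) (hw0 : ∀ x, 0 ≤ w x)
    (hw1 : Finsupp.linearCombination ℝ (fun _ : E => (1:ℝ)) w = 1)
    (hsupp : (w.support : Set E) ⊆ ↑F ∪ ↑(cutSet ℓ c F))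
    (hall : ∀ x ∈ w.support, ℓ x ≤ c) :
    Finsupp.linearCombination ℝ (id : E → E) w
      ∈ convexHull ℝ (↑(cutSet ℓ c F) : Set E) := by
  classical
  have hsum : ∑ x ∈ w.support, w x = 1 := by rw [← sum1_eq]; exact hw1
  have hL : Finsupp.linearCombination ℝ (id : E → E) w
      = w.support.centerMass w id := by
    rw [Finset.centerMass, hsum, inv_one, one_smul, Finsupp.linearCombination_apply,
      Finsupp.sum]
  rw [hL]
  apply Finset.centerMass_mem_convexHull
  · exact fun i _ => hw0 i
  · rw [hsum]; norm_num
  · intro i hi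
    rcases hsupp hi with h | h
    · exact Finset.mem_coe.mpr (mem_cutSet_left (Finset.mem_coe.mp h) (hall i hi))
    · exact h

theorem cut_aux (ℓ : E →ₗ[ℝ] ℝ) (c : ℝ) (F : Finset E) :
    ∀ (N : ℕ) (w : E →₀ ℝ), (∀ x, 0 ≤ w x) →
      Finsupp.linearCombination ℝ (fun _ : E => (1:ℝ)) w = 1 →
      (w.support : Set E) ⊆ ↑F ∪ ↑(cutSet ℓ c F) →
      ((w.support.filter fun x => ℓ x ≠ c).card ≤ N) →
      ℓ (Finsupp.linearCombination ℝ (id : E → E) w) ≤ c →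
      Finsupp.linearCombination ℝ (id : E → E) w
        ∈ convexHull ℝ (↑(cutSet ℓ c F) : Set E) := by
  classical
  intro N
  induction N with
  | zero =>
    intro w hw0 hw1 hsupp hcard hlc
    refine cut_terminal w hw0 hw1 hsupp (fun x hx => ?_)
    by_contra hxc
    have : x ∈ w.support.filter fun x => ℓ x ≠ c :=
      Finset.mem_filter.mpr ⟨hx, fun h => hxc (le_of_eq h)⟩
    have := Finset.card_pos.mpr ⟨x, this⟩
    omega
  | succ n ih =>
    intro w hw0 hw1 hsupp hcard hlc
    by_cases hall : ∀ x ∈ w.support, ℓ x ≤ c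
    · exact cut_terminal w hw0 hw1 hsupp hall
    push_neg at hall
    obtain ⟨j, hjs, hjc⟩ := hall
    have hsum : ∑ x ∈ w.support, w x = 1 := by rw [← sum1_eq]; exact hw1
    have hwj : 0 < w j :=
      lt_of_le_of_ne (hw0 j) (Ne.symm (Finsupp.mem_support_iff.mp hjs))
    -- find a partner q with ℓ q < c
    have hq : ∃ q ∈ w.support, ℓ q < c := by
      by_contra h
      push_neg at h
      have h1 : ∑ x ∈ w.support, w x * c < ∑ x ∈ w.support, w x * ℓ x := by
        apply Finset.sum_lt_sum
        · exact fun i hi => mul_le_mul_of_nonneg_left (h i hi) (hw0 i)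
        · exact ⟨j, hjs, by nlinarith⟩
      rw [← Finset.sum_mul, hsum, one_mul, ← lin_L] at h1
      linarith
    obtain ⟨q, hqs, hqc⟩ := hq
    have hwq : 0 < w q :=
      lt_of_le_of_ne (hw0 q) (Ne.symm (Finsupp.mem_support_iff.mp hqs))
    have hjF : j ∈ F := by
      rcases hsupp hjs with h | h
      · exact Finset.mem_coe.mp h
      · exact absurd (lin_le_of_cutSet (Finset.mem_coe.mp h)) (not_le.mpr hjc)
    have hqF : q ∈ F := by
      rcases hsupp hqs with h | h
      · exact Finset.mem_coe.mp h
      · rcases mem_of_cutSet (Finset.mem_coe.mp h) with h' | h'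
        · exact h'
        · exact absurd h' (ne_of_lt hqc)
    set θ := (c - ℓ q) / (ℓ j - ℓ q) with hθdef
    have hθ0 : 0 < θ := div_pos (by linarith) (by linarith)
    have hθ1 : θ < 1 := by rw [div_lt_one (by linarith)]; linarith
    set m := cutPt ℓ c q j with hmdef
    have hmc : ℓ m = c := lin_cutPt hqc hjc
    have hmG : m ∈ cutSet ℓ c F := mem_cutSet_pair hqF hjF hqc hjc
    have hqj : q ≠ j := fun h => by rw [h] at hqc; linarith
    have hmq : m ≠ q := fun h => by rw [h] at hmc; linarith
    have hmj : m ≠ j := fun h => by rw [h] at hmc; linarith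
    have h1θ : (1:ℝ) - θ ≠ 0 := by linarith
    have hθne : θ ≠ 0 := ne_of_gt hθ0
    set s := min (w q / (1 - θ)) (w j / θ) with hsdef
    have hs0 : 0 < s := lt_min (div_pos hwq (by linarith)) (div_pos hwj hθ0)
    have hs1 : s * (1 - θ) ≤ w q := by
      have h := min_le_left (w q / (1 - θ)) (w j / θ)
      rw [← hsdef] at h
      calc s * (1 - θ) ≤ (w q / (1 - θ)) * (1 - θ) := by nlinarith
        _ = w q := by rw [div_mul_cancel₀ _ h1θ]
    have hs2 : s * θ ≤ w j := by
      have h := min_le_right (w q / (1 - θ)) (w j / θ)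
      rw [← hsdef] at h
      calc s * θ ≤ (w j / θ) * θ := by nlinarith
        _ = w j := by rw [div_mul_cancel₀ _ hθne]
    have hs3 : s * (1 - θ) = w q ∨ s * θ = w j := by
      rcases min_choice (w q / (1 - θ)) (w j / θ) with h | h
      · left; rw [hsdef, h, div_mul_cancel₀ _ h1θ]
      · right; rw [hsdef, h, div_mul_cancel₀ _ hθne]
    set w' : E →₀ ℝ := w + Finsupp.single q (-(s * (1 - θ)))
      + Finsupp.single j (-(s * θ)) + Finsupp.single m s with hw'def
    have hw'q : w' q = w q - s * (1 - θ) := by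
      simp [hw'def, Finsupp.single_apply, hqj.symm, hmq]
      ring
    have hw'j : w' j = w j - s * θ := by
      simp [hw'def, Finsupp.single_apply, hqj, hmj]
      ring
    have hw'm : w' m = w m + s := by
      simp [hw'def, Finsupp.single_apply, hmq.symm, hmj.symm]
    have hw'x : ∀ x, x ≠ q → x ≠ j → x ≠ m → w' x = w x := by
      intro x h1 h2 h3
      simp [hw'def, Finsupp.single_apply, Ne.symm h1, Ne.symm h2, Ne.symm h3]
    have hw'0 : ∀ x, 0 ≤ w' x := by
      intro x
      rcases eq_or_ne x q with rfl | h1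
      · rw [hw'q]; linarith
      rcases eq_or_ne x j with rfl | h2
      · rw [hw'j]; linarith
      rcases eq_or_ne x m with rfl | h3
      · rw [hw'm]; have := hw0 m; linarith
      · rw [hw'x x h1 h2 h3]; exact hw0 x
    have hw'1 : Finsupp.linearCombination ℝ (fun _ : E => (1:ℝ)) w' = 1 := by
      simp only [hw'def, map_add, Finsupp.linearCombination_single, hw1, smul_eq_mul,
        mul_one]
      ring
    have hLL : Finsupp.linearCombination ℝ (id : E → E) w'
        = Finsupp.linearCombination ℝ (id : E → E) w := by
      simp only [hw'def, map_add, Finsupp.linearCombination_single, id_eq]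
      have hm2 : m = (1 - θ) • q + θ • j := rfl
      rw [hm2]
      rw [smul_add, smul_smul, smul_smul]
      module
    have hsupp' : (w'.support : Set E) ⊆ ↑F ∪ ↑(cutSet ℓ c F) := by
      intro x hx
      rcases eq_or_ne x q with rfl | h1
      · exact Or.inl (Finset.mem_coe.mpr hqF)
      rcases eq_or_ne x j with rfl | h2
      · exact Or.inl (Finset.mem_coe.mpr hjF)
      rcases eq_or_ne x m with rfl | h3
      · exact Or.inr (Finset.mem_coe.mpr hmG)
      · apply hsupp
        rw [Finset.mem_coe, Finsupp.mem_support_iff] at hx ⊢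
        rwa [hw'x x h1 h2 h3] at hx
    -- the measure decreases
    obtain ⟨x₀, hx₀f, hx₀0⟩ :
        ∃ x₀, x₀ ∈ (w.support.filter fun x => ℓ x ≠ c) ∧ w' x₀ = 0 := by
      rcases hs3 with h3 | h3
      · exact ⟨q, Finset.mem_filter.mpr ⟨hqs, ne_of_lt hqc⟩, by rw [hw'q, h3]; ring⟩
      · exact ⟨j, Finset.mem_filter.mpr ⟨hjs, ne_of_gt hjc⟩, by rw [hw'j, h3]; ring⟩
    have hcard' : (w'.support.filter fun x => ℓ x ≠ c).card ≤ n := by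
      have hsub : (w'.support.filter fun x => ℓ x ≠ c)
          ⊆ (w.support.filter fun x => ℓ x ≠ c).erase x₀ := by
        intro x hx
        obtain ⟨hxs, hxc⟩ := Finset.mem_filter.mp hx
        have hxm : x ≠ m := fun h => hxc (h ▸ hmc)
        have hxx₀ : x ≠ x₀ := fun h => by
          rw [Finsupp.mem_support_iff, h, hx₀0] at hxs; exact hxs rfl
        refine Finset.mem_erase.mpr ⟨hxx₀, Finset.mem_filter.mpr ⟨?_, hxc⟩⟩
        rcases eq_or_ne x q with rfl | h1
        · exact hqs
        rcases eq_or_ne x j with rfl | h2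
        · exact hjs
        · rw [Finsupp.mem_support_iff] at hxs ⊢
          rwa [hw'x x h1 h2 hxm] at hxs
      calc (w'.support.filter fun x => ℓ x ≠ c).card
          ≤ ((w.support.filter fun x => ℓ x ≠ c).erase x₀).card :=
            Finset.card_le_card hsub
        _ = (w.support.filter fun x => ℓ x ≠ c).card - 1 :=
            Finset.card_erase_of_mem hx₀f
        _ ≤ n := by omega
    have := ih w' hw'0 hw'1 hsupp' hcard' (by rw [hLL]; exact hlc)
    rwa [hLL] at this

theorem convexHull_inter_halfspace (ℓ : E →ₗ[ℝ] ℝ) (c : ℝ) (F : Finset E) :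
    convexHull ℝ (↑F : Set E) ∩ {x | ℓ x ≤ c}
      = convexHull ℝ (↑(cutSet ℓ c F) : Set E) := by
  classical
  apply Set.Subset.antisymm
  · rintro z ⟨hz, hzc⟩
    rw [Finset.convexHull_eq] at hz
    obtain ⟨w, hw0, hw1, hwz⟩ := hz
    set f : E → ℝ := fun x => if x ∈ F then w x else 0 with hf
    have hfsupp : ∀ a, f a ≠ 0 → a ∈ F := by
      intro a ha
      by_contra h
      exact ha (by simp [hf, h])
    set w₀ : E →₀ ℝ := Finsupp.onFinset F f hfsupp with hw₀
    have hw₀x : ∀ x, w₀ x = f x := fun x => rfl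
    have hw₀supp : w₀.support ⊆ F := Finsupp.support_onFinset_subset
    have hsumR : ∀ (g : E → ℝ → ℝ), (∀ x, g x 0 = 0) →
        (w₀.sum g) = ∑ x ∈ F, g x (f x) := by
      intro g hg
      rw [Finsupp.sum]
      apply Finset.sum_subset hw₀supp
      intro x hx hx'
      rw [Finsupp.notMem_support_iff] at hx'
      rw [hw₀x] at hx'
      rw [hw₀x, hx', hg]
    have hsumE : ∀ (g : E → ℝ → E), (∀ x, g x 0 = 0) →
        (w₀.sum g) = ∑ x ∈ F, g x (f x) := by
      intro g hg
      rw [Finsupp.sum]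
      apply Finset.sum_subset hw₀supp
      intro x hx hx'
      rw [Finsupp.notMem_support_iff] at hx'
      rw [hw₀x] at hx'
      rw [hw₀x, hx', hg]
    have hS1 : Finsupp.linearCombination ℝ (fun _ : E => (1:ℝ)) w₀ = 1 := by
      rw [Finsupp.linearCombination_apply,
        hsumR (fun i a => a • (1:ℝ)) (fun x => zero_smul ℝ _)]
      have he : ∑ x ∈ F, f x • (1:ℝ) = ∑ x ∈ F, w x :=
        Finset.sum_congr rfl (fun x hx => by simp [hf, hx])
      rw [he, hw1]
    have hLz : Finsupp.linearCombination ℝ (id : E → E) w₀ = z := by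
      rw [Finsupp.linearCombination_apply,
        hsumE (fun i a => a • id i) (fun x => zero_smul ℝ _)]
      rw [← hwz, Finset.centerMass, hw1, inv_one, one_smul]
      apply Finset.sum_congr rfl
      intro x hx
      simp [hf, hx]
    have hnn : ∀ x, 0 ≤ w₀ x := by
      intro x
      rw [hw₀x]
      show 0 ≤ if x ∈ F then w x else 0
      by_cases h : x ∈ F
      · rw [if_pos h]; exact hw0 _ h
      · rw [if_neg h]
    have := cut_aux ℓ c F ((w₀.support.filter fun x => ℓ x ≠ c).card) w₀
      hnn hS1 (fun x hx => Or.inl (hw₀supp hx)) le_rfl (by rw [hLz]; exact hzc)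
    rwa [hLz] at this
  · apply convexHull_min
    · intro x hx
      rw [Finset.mem_coe] at hx
      exact ⟨cutSet_subset_hull hx, lin_le_of_cutSet hx⟩
    · exact (convex_convexHull ℝ _).inter (convex_halfSpace_le ℓ.isLinear c)

theorem convexHull_inter_halfspaces (F : Finset E) :
    ∀ (cs : List ((E →ₗ[ℝ] ℝ) × ℝ)),
    ∃ G : Finset E,
      convexHull ℝ (↑F : Set E) ∩ {x | ∀ p ∈ cs, p.1 x ≤ p.2}
        = convexHull ℝ (↑G : Set E) := by
  intro cs
  induction cs generalizing F with
  | nil => exact ⟨F, by simp⟩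
  | cons hd tl ih =>
    obtain ⟨G, hG⟩ := ih F
    refine ⟨cutSet hd.1 hd.2 G, ?_⟩
    rw [← convexHull_inter_halfspace, ← hG]
    ext x
    simp only [Set.mem_inter_iff, Set.mem_setOf_eq, List.mem_cons]
    constructor
    · rintro ⟨h1, h2⟩
      exact ⟨⟨h1, fun p hp => h2 p (Or.inr hp)⟩, h2 hd (Or.inl rfl)⟩
    · rintro ⟨⟨h1, h2⟩, h3⟩
      refine ⟨h1, fun p hp => ?_⟩
      rcases hp with rfl | hp
      · exact h3
      · exact h2 p hp

end Cut




theorem neg_one_sum (k : ℕ) :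
    ∑ n ∈ Finset.range k, (-1:ℝ)^n = if Even k then 0 else 1 := by
  induction k with
  | zero => simp
  | succ n ih =>
    rw [Finset.sum_range_succ, ih]
    rcases Nat.even_or_odd n with h | h
    · rw [if_pos h, Even.neg_one_pow h,
        if_neg (by rw [Nat.even_add_one]; exact not_not_intro h)]
      ring
    · rw [if_neg (Nat.not_even_iff_odd.mpr h), Odd.neg_one_pow h,
        if_pos (by rw [Nat.even_add_one]; exact Nat.not_even_iff_odd.mpr h)]
      ring

theorem switchFun_eq_sum {σ : ℕ} (b : ℝ) (t : Fin σ → ℝ) (ht : Monotone t) (x : ℝ) :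
    switchFun σ b t x
      = b + (1 - 2*b) * ∑ j : Fin σ, (-1:ℝ)^(j:ℕ) * (if t j ≤ x then 1 else 0) := by
  classical
  set k := (Finset.univ.filter fun i => t i ≤ x).card with hk
  have hkσ : k ≤ σ := le_trans (Finset.card_filter_le _ _) (by simp)
  have hiff : ∀ j : Fin σ, t j ≤ x ↔ (j:ℕ) < k := by
    intro j
    constructor
    · intro hj
      have hsub : Finset.Iic j ⊆ Finset.univ.filter (fun i => t i ≤ x) := by
        intro i hi
        rw [Finset.mem_Iic] at hi
        simp only [Finset.mem_filter, Finset.mem_univ, true_and]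
        exact le_trans (ht hi) hj
      have hcard := Finset.card_le_card hsub
      rw [Fin.card_Iic] at hcard
      omega
    · intro hj
      by_contra hx
      have hsub : Finset.univ.filter (fun i : Fin σ => t i ≤ x) ⊆ Finset.Iio j := by
        intro i hi
        simp only [Finset.mem_filter, Finset.mem_univ, true_and] at hi
        rw [Finset.mem_Iio]
        by_contra hij
        exact hx (le_trans (ht (not_lt.mp hij)) hi)
      have hcard := Finset.card_le_card hsub
      rw [Fin.card_Iio] at hcard
      omega
  have hs : ∑ j : Fin σ, (-1:ℝ)^(j:ℕ) * (if t j ≤ x then 1 else 0)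
      = if Even k then 0 else 1 := by
    have h1 : ∑ j : Fin σ, (-1:ℝ)^(j:ℕ) * (if t j ≤ x then 1 else 0)
        = ∑ j : Fin σ, (if (j:ℕ) < k then (-1:ℝ)^(j:ℕ) else 0) := by
      apply Finset.sum_congr rfl
      intro j _
      by_cases hj : t j ≤ x
      · rw [if_pos hj, if_pos ((hiff j).mp hj), mul_one]
      · rw [if_neg hj, if_neg (fun h => hj ((hiff j).mpr h)), mul_zero]
    rw [h1, Fin.sum_univ_eq_sum_range (fun n => if n < k then (-1:ℝ)^n else 0)]
    have h2 : ∑ n ∈ Finset.range σ, (if n < k then (-1:ℝ)^n else 0)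
        = ∑ n ∈ Finset.range k, (-1:ℝ)^n := by
      rw [← Finset.sum_filter]
      congr 1
      ext n
      simp only [Finset.mem_filter, Finset.mem_range]
      omega
    rw [h2, neg_one_sum]
  rw [hs]
  show (if Even k then b else 1 - b) = _
  split_ifs <;> ring

noncomputable def clampR (a b s : ℝ) : ℝ := min (max s a) b

theorem integral_ind (a b s : ℝ) (hab : a < b) :
    ∫ x in Ioo a b, (if s ≤ x then (1:ℝ) else 0) = b - clampR a b s := by
  have h1 : (fun x => if s ≤ x then (1:ℝ) else 0)
      = (Ici s).indicator (fun _ => (1:ℝ)) := by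
    funext x
    rw [indicator_apply]
    simp [mem_Ici]
  rw [h1, setIntegral_indicator measurableSet_Ici, setIntegral_const, smul_eq_mul,
    mul_one]
  rcases le_or_gt s a with h | h
  · have h2 : Ioo a b ∩ Ici s = Ioo a b :=
      inter_eq_left.mpr (fun x hx => le_trans h (le_of_lt hx.1))
    rw [h2, measureReal_def, Real.volume_Ioo, ENNReal.toReal_ofReal (by linarith), clampR,
      max_eq_right h, min_eq_left (le_of_lt hab)]
  · rcases le_or_gt s b with h2 | h2
    · have h3 : Ioo a b ∩ Ici s = Ico s b := by
        ext x
        simp only [mem_inter_iff, mem_Ioo, mem_Ico, mem_Ici]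
        constructor
        · rintro ⟨⟨_, h4⟩, h5⟩; exact ⟨h5, h4⟩
        · rintro ⟨h4, h5⟩; exact ⟨⟨lt_of_lt_of_le h h4, h5⟩, h4⟩
      rw [h3, measureReal_def, Real.volume_Ico, ENNReal.toReal_ofReal (by linarith), clampR,
        max_eq_left (le_of_lt h), min_eq_left h2]
    · have h3 : Ioo a b ∩ Ici s = ∅ := by
        ext x
        simp only [mem_inter_iff, mem_Ioo, mem_Ici, mem_empty_iff_false, iff_false]
        rintro ⟨⟨_, h4⟩, h5⟩
        linarith
      rw [h3, measureReal_def, measure_empty, ENNReal.toReal_zero, clampR,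
        max_eq_left (by linarith), min_eq_right (le_of_lt h2)]
      ring

theorem indicator_integrable {a b s : ℝ} :
    Integrable (fun x => (if s ≤ x then (1:ℝ) else 0)) (volume.restrict (Ioo a b)) := by
  haveI : IsFiniteMeasure (volume.restrict (Ioo a b)) :=
    ⟨by rw [Measure.restrict_apply_univ, Real.volume_Ioo]; exact ENNReal.ofReal_lt_top⟩
  have h1 : (fun x => if s ≤ x then (1:ℝ) else 0)
      = (Ici s).indicator (fun _ => (1:ℝ)) := by
    funext x
    rw [indicator_apply]
    simp [mem_Ici]
  rw [h1]
  exact (integrable_const (1:ℝ)).indicator measurableSet_Ici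

theorem integral_switch {σ : ℕ} (b : ℝ) (t : Fin σ → ℝ) (ht : Monotone t)
    {a c : ℝ} (hac : a < c) :
    ∫ x in Ioo a c, switchFun σ b t x
      = b * (c - a) + (1 - 2*b) * ∑ j : Fin σ, (-1:ℝ)^(j:ℕ) * (c - clampR a c (t j)) := by
  haveI : IsFiniteMeasure (volume.restrict (Ioo a c)) :=
    ⟨by rw [Measure.restrict_apply_univ, Real.volume_Ioo]; exact ENNReal.ofReal_lt_top⟩
  have hfun : ∀ x, switchFun σ b t x
      = b + ∑ j : Fin σ, ((1 - 2*b) * (-1:ℝ)^(j:ℕ)) * (if t j ≤ x then 1 else 0) := by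
    intro x
    rw [switchFun_eq_sum b t ht x, Finset.mul_sum]
    congr 1
    apply Finset.sum_congr rfl
    intro j _
    ring
  simp_rw [hfun]
  rw [integral_add (integrable_const b)
    (integrable_finset_sum _ (fun j _ => indicator_integrable.const_mul _)),
    integral_const, integral_finset_sum _ (fun j _ => indicator_integrable.const_mul _)]
  simp_rw [integral_const_mul, integral_ind a c _ hac]
  rw [measureReal_def, Measure.restrict_apply_univ, Real.volume_Ioo, ENNReal.toReal_ofReal (by linarith),
    smul_eq_mul, Finset.mul_sum]
  congr 1
  · ring
  · apply Finset.sum_congr rfl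
    intro j _
    ring

theorem switchFun_measurable {σ : ℕ} (b : ℝ) (t : Fin σ → ℝ) :
    Measurable (switchFun σ b t) := by
  classical
  have h1 : Measurable (fun x => (Finset.univ.filter fun i : Fin σ => t i ≤ x).card) := by
    have h2 : (fun x => (Finset.univ.filter fun i : Fin σ => t i ≤ x).card)
        = fun x => ∑ i : Fin σ, if t i ≤ x then 1 else 0 := by
      funext x
      rw [Finset.card_filter]
    rw [h2]
    apply Finset.measurable_sum
    intro i _
    exact Measurable.ite (measurableSet_Ici (a := t i)) measurable_const measurable_const
  exact (measurable_from_nat (f := fun n => if Even n then b else 1 - b)).comp h1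

theorem switchFun_memLp {σ : ℕ} (b : ℝ) (t : Fin σ → ℝ) (p : ℝ≥0∞) {s : Set ℝ}
    (hs : volume s < ⊤) : MemLp (switchFun σ b t) p (volume.restrict s) := by
  haveI : IsFiniteMeasure (volume.restrict s) :=
    ⟨by rwa [Measure.restrict_apply_univ]⟩
  apply MemLp.of_bound (switchFun_measurable b t).aestronglyMeasurable (max |b| |1 - b|)
  apply ae_of_all
  intro x
  rw [Real.norm_eq_abs]
  show |if Even ((Finset.univ.filter fun i => t i ≤ x).card) then b else 1 - b| ≤ _
  split_ifs
  · exact le_max_left _ _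
  · exact le_max_right _ _




section Pattern
variable {σ M : ℕ} (A B : Fin M → ℝ)

/-- Coordinate projection as a linear map. -/
noncomputable def prj {σ : ℕ} (j : Fin σ) : (Fin σ → ℝ) →ₗ[ℝ] ℝ :=
  LinearMap.proj (R := ℝ) (φ := fun _ : Fin σ => ℝ) j

@[simp] theorem prj_apply {σ : ℕ} (j : Fin σ) (x : Fin σ → ℝ) : prj j x = x j := rfl

/-- Constraints forcing monotonicity. -/
noncomputable def monoList (σ : ℕ) : List (((Fin σ → ℝ) →ₗ[ℝ] ℝ) × ℝ) :=
  (Finset.univ : Finset (Fin σ × Fin σ)).toList.map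
    (fun q => (if q.1 ≤ q.2 then prj q.1 - prj q.2 else 0, 0))

noncomputable def upC (r : Fin σ → Fin M → Fin 3) (q : Fin σ × Fin M) :
    ((Fin σ → ℝ) →ₗ[ℝ] ℝ) × ℝ :=
  if r q.1 q.2 = 0 then (prj q.1, A q.2)
  else if r q.1 q.2 = 1 then (prj q.1, B q.2)
  else (0, 0)

noncomputable def loC (r : Fin σ → Fin M → Fin 3) (q : Fin σ × Fin M) :
    ((Fin σ → ℝ) →ₗ[ℝ] ℝ) × ℝ :=
  if r q.1 q.2 = 0 then (0, 0)
  else if r q.1 q.2 = 1 then (-prj q.1, -(A q.2))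
  else (-prj q.1, -(B q.2))

noncomputable def csList (r : Fin σ → Fin M → Fin 3) :
    List (((Fin σ → ℝ) →ₗ[ℝ] ℝ) × ℝ) :=
  monoList σ ++ ((Finset.univ : Finset (Fin σ × Fin M)).toList.map (upC A B r))
    ++ ((Finset.univ : Finset (Fin σ × Fin M)).toList.map (loC A B r))

/-- Semantic meaning of the constraints for pattern `r`. -/
def SatP (r : Fin σ → Fin M → Fin 3) (x : Fin σ → ℝ) : Prop :=
  Monotone x ∧ ∀ j i, (r j i = 0 → x j ≤ A i) ∧
    (r j i = 1 → A i ≤ x j ∧ x j ≤ B i) ∧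
    (r j i ≠ 0 → r j i ≠ 1 → B i ≤ x j)

theorem satP_iff (r : Fin σ → Fin M → Fin 3) (x : Fin σ → ℝ) :
    (∀ pc ∈ csList A B r, pc.1 x ≤ pc.2) ↔ SatP A B r x := by
  constructor
  · intro h
    constructor
    · intro j j' hjj
      have hmem : ((prj j - prj j' : (Fin σ → ℝ) →ₗ[ℝ] ℝ), (0:ℝ))
          ∈ csList A B r := by
        rw [csList]
        refine List.mem_append.mpr (Or.inl (List.mem_append.mpr (Or.inl ?_)))
        rw [monoList]
        refine List.mem_map.mpr ⟨(j, j'), Finset.mem_toList.mpr (Finset.mem_univ _), ?_⟩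
        rw [if_pos hjj]
      have := h _ hmem
      simp only [LinearMap.sub_apply, prj_apply] at this
      linarith
    · intro j i
      have hup : upC A B r (j, i) ∈ csList A B r := by
        rw [csList]
        exact List.mem_append.mpr (Or.inl (List.mem_append.mpr (Or.inr
          (List.mem_map.mpr ⟨(j, i), Finset.mem_toList.mpr (Finset.mem_univ _), rfl⟩))))
      have hlo : loC A B r (j, i) ∈ csList A B r := by
        rw [csList]
        exact List.mem_append.mpr (Or.inr
          (List.mem_map.mpr ⟨(j, i), Finset.mem_toList.mpr (Finset.mem_univ _), rfl⟩))
      have hu := h _ hup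
      have hl := h _ hlo
      refine ⟨fun h0 => ?_, fun h1 => ?_, fun h0 h1 => ?_⟩
      · rw [upC, if_pos h0] at hu
        simpa using hu
      · have h0 : r j i ≠ 0 := by rw [h1]; decide
        rw [upC, if_neg h0, if_pos h1] at hu
        rw [loC, if_neg h0, if_pos h1] at hl
        simp only [LinearMap.neg_apply, prj_apply] at hu hl
        constructor <;> [linarith; simpa using hu]
      · rw [loC, if_neg h0, if_neg h1] at hl
        simp only [LinearMap.neg_apply, prj_apply] at hl
        linarith
  · rintro ⟨hmono, hc⟩ pc hpc
    rw [csList] at hpc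
    rcases List.mem_append.mp hpc with h' | h'
    · rcases List.mem_append.mp h' with h'' | h''
      · rw [monoList] at h''
        obtain ⟨q, -, rfl⟩ := List.mem_map.mp h''
        by_cases hq : q.1 ≤ q.2
        · rw [if_pos hq]
          simp only [LinearMap.sub_apply, prj_apply]
          have := hmono hq
          linarith
        · rw [if_neg hq]
          simp
      · obtain ⟨q, -, rfl⟩ := List.mem_map.mp h''
        obtain ⟨h0, h1, h2⟩ := hc q.1 q.2
        rw [upC]
        by_cases e0 : r q.1 q.2 = 0
        · rw [if_pos e0]
          simpa using h0 e0
        · rw [if_neg e0]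
          by_cases e1 : r q.1 q.2 = 1
          · rw [if_pos e1]
            simpa using (h1 e1).2
          · rw [if_neg e1]
            simp
    · obtain ⟨q, -, rfl⟩ := List.mem_map.mp h'
      obtain ⟨h0, h1, h2⟩ := hc q.1 q.2
      rw [loC]
      by_cases e0 : r q.1 q.2 = 0
      · rw [if_pos e0]
        simp
      · rw [if_neg e0]
        by_cases e1 : r q.1 q.2 = 1
        · rw [if_pos e1]
          simp only [LinearMap.neg_apply, prj_apply]
          have := (h1 e1).1
          linarith
        · rw [if_neg e1]
          simp only [LinearMap.neg_apply, prj_apply]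
          have := h2 e0 e1
          linarith

/-- The canonical pattern of a vector. -/
noncomputable def pat (x : Fin σ → ℝ) : Fin σ → Fin M → Fin 3 := fun j i =>
  if x j ≤ A i then 0 else if x j ≤ B i then 1 else 2

theorem satP_pat (x : Fin σ → ℝ) (hx : Monotone x) : SatP A B (pat A B x) x := by
  refine ⟨hx, fun j i => ?_⟩
  rw [pat]
  by_cases h0 : x j ≤ A i
  · rw [if_pos h0]
    exact ⟨fun _ => h0, fun h => by exact absurd h (by decide), fun h _ => absurd rfl h⟩
  · rw [if_neg h0]
    by_cases h1 : x j ≤ B i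
    · rw [if_pos h1]
      exact ⟨fun h => absurd h (by decide), fun _ => ⟨le_of_not_ge h0, h1⟩,
        fun _ h => absurd rfl h⟩
    · rw [if_neg h1]
      exact ⟨fun h => absurd h (by decide), fun h => absurd h (by decide),
        fun _ _ => le_of_not_ge h1⟩

noncomputable def clampVal (r : Fin σ → Fin M → Fin 3) (t : Fin σ → ℝ)
    (j : Fin σ) (i : Fin M) : ℝ :=
  if r j i = 0 then A i else if r j i = 1 then t j else B i

theorem clampVal_eq (r : Fin σ → Fin M → Fin 3) (t : Fin σ → ℝ)
    (hst : SatP A B r t) (hAB : ∀ i, A i < B i) (j : Fin σ) (i : Fin M) :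
    clampR (A i) (B i) (t j) = clampVal A B r t j i := by
  obtain ⟨-, hc⟩ := hst
  obtain ⟨h0, h1, h2⟩ := hc j i
  rw [clampVal, clampR]
  by_cases e0 : r j i = 0
  · rw [if_pos e0, max_eq_right (h0 e0), min_eq_left (le_of_lt (hAB i))]
  · rw [if_neg e0]
    by_cases e1 : r j i = 1
    · rw [if_pos e1, max_eq_left (h1 e1).1, min_eq_left (h1 e1).2]
    · rw [if_neg e1, max_eq_left (le_trans (le_of_lt (hAB i)) (h2 e0 e1)),
        min_eq_right (h2 e0 e1)]

end Pattern

section Gfun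
variable {σ M : ℕ} (A B : Fin M → ℝ)

noncomputable def coeffC (bb : ℝ) (r : Fin σ → Fin M → Fin 3) (i : Fin M) (j : Fin σ) : ℝ :=
  (B i - A i)⁻¹ * ((1 - 2*bb) * (-1:ℝ)^(j:ℕ) * (if r j i = 1 then (-1:ℝ) else 0))

noncomputable def constC (bb : ℝ) (r : Fin σ → Fin M → Fin 3) : Fin M → ℝ := fun i =>
  (B i - A i)⁻¹ * (bb * (B i - A i) + (1 - 2*bb) *
    ∑ j : Fin σ, (-1:ℝ)^(j:ℕ) *
      (B i - (if r j i = 0 then A i else if r j i = 1 then 0 else B i)))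

noncomputable def linC (bb : ℝ) (r : Fin σ → Fin M → Fin 3) :
    (Fin σ → ℝ) →ₗ[ℝ] (Fin M → ℝ) :=
  LinearMap.pi (fun i => ∑ j : Fin σ, coeffC A B bb r i j • prj j)

noncomputable def gfun (bb : ℝ) (r : Fin σ → Fin M → Fin 3) :
    (Fin σ → ℝ) → (Fin M → ℝ) := fun t => constC A B bb r + linC A B bb r t

theorem gfun_apply (bb : ℝ) (r : Fin σ → Fin M → Fin 3) (t : Fin σ → ℝ) (i : Fin M) :
    gfun A B bb r t i
      = (B i - A i)⁻¹ * (bb * (B i - A i) + (1 - 2*bb) *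
          ∑ j : Fin σ, (-1:ℝ)^(j:ℕ) * (B i - clampVal A B r t j i)) := by
  have hlin : linC A B bb r t i = ∑ j : Fin σ, coeffC A B bb r i j * t j := by
    rw [linC, LinearMap.pi_apply, LinearMap.coe_sum, Finset.sum_apply]
    apply Finset.sum_congr rfl
    intro j _
    rw [LinearMap.smul_apply, prj_apply, smul_eq_mul]
  have hterm : ∀ j : Fin σ, coeffC A B bb r i j * t j
      = (B i - A i)⁻¹ * ((1 - 2*bb) * ((-1:ℝ)^(j:ℕ) * (B i - clampVal A B r t j i)))
        - (B i - A i)⁻¹ * ((1 - 2*bb) * ((-1:ℝ)^(j:ℕ) *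
            (B i - (if r j i = 0 then A i else if r j i = 1 then 0 else B i)))) := by
    intro j
    rw [coeffC, clampVal]
    by_cases e0 : r j i = 0
    · simp only [if_pos e0, if_neg (show ¬(r j i = 1) by rw [e0]; decide)]
      ring
    · by_cases e1 : r j i = 1
      · simp only [if_neg e0, if_pos e1]
        ring
      · simp only [if_neg e0, if_neg e1]
        ring
  show constC A B bb r i + linC A B bb r t i = _
  rw [hlin, Finset.sum_congr rfl (fun j _ => hterm j), Finset.sum_sub_distrib,
    ← Finset.mul_sum, ← Finset.mul_sum, ← Finset.mul_sum, ← Finset.mul_sum, constC]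
  ring

theorem gfun_image (bb : ℝ) (r : Fin σ → Fin M → Fin 3) (s : Set (Fin σ → ℝ)) :
    gfun A B bb r '' (convexHull ℝ s) = convexHull ℝ (gfun A B bb r '' s) := by
  have h1 : gfun A B bb r
      = (fun y => constC A B bb r +ᵥ y) ∘ (linC A B bb r) := rfl
  rw [h1, image_comp, image_comp, LinearMap.image_convexHull, image_vadd, image_vadd,
    convexHull_vadd]

end Gfun


theorem convexHull_iUnion_hulls {α : Type*} [AddCommGroup α] [Module ℝ α]
    {ι : Sort*} (f : ι → Set α) :
    convexHull ℝ (⋃ i, convexHull ℝ (f i)) = convexHull ℝ (⋃ i, f i) := by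
  apply Subset.antisymm
  · exact convexHull_min
      (iUnion_subset fun i => convexHull_mono (subset_iUnion f i))
      (convex_convexHull ℝ _)
  · exact convexHull_mono (iUnion_subset fun i =>
      (subset_convexHull ℝ (f i)).trans
        (subset_iUnion (fun i => convexHull ℝ (f i)) i))

/-- Theorem 3.8: for a polytope `P = conv F ⊆ ℝ_{≥0}^σ` and a
local averaging projection `Π` over disjoint intervals `(A i, B i) ⊆ (0,T)`,
the set `C_{D_P,Π} = conv (Π '' D_P)` is a polytope in `ℝ^M`. -/
theorem stmt_15
    (T : ℝ) (hT : 0 < T) (σ : ℕ) (p : ℝ≥0∞) [Fact (1 ≤ p)] (hp : p ≠ ⊤)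
    (F : Finset (Fin σ → ℝ)) (hF : ∀ x ∈ F, ∀ i, 0 ≤ x i)
    (M : ℕ) (A B : Fin M → ℝ) (hAB : ∀ i, A i < B i)
    (hsub : ∀ i, Ioo (A i) (B i) ⊆ Ioo (0:ℝ) T)
    (hdisj : ∀ i i' : Fin M, i ≠ i' →
      Disjoint (Ioo (A i) (B i)) (Ioo (A i') (B i'))) :
    ∃ F' : Finset (Fin M → ℝ),
      convexHull ℝ
        ((fun u : Lp ℝ p (volume.restrict (Ioo (0:ℝ) T)) =>
            fun i : Fin M => (B i - A i)⁻¹ *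
              ∫ t in Ioo (A i) (B i), (u : ℝ → ℝ) t
                ∂(volume.restrict (Ioo (0:ℝ) T))) ''
          {u : Lp ℝ p (volume.restrict (Ioo (0:ℝ) T)) |
            ∃ b : ℝ, (b = 0 ∨ b = 1) ∧ ∃ t : Fin σ → ℝ, Monotone t ∧
              t ∈ convexHull ℝ (F : Set (Fin σ → ℝ)) ∧
              (u : ℝ → ℝ) =ᵐ[volume.restrict (Ioo (0:ℝ) T)] switchFun σ b t}) =
      convexHull ℝ (F' : Set (Fin M → ℝ)) := by
  classical
  set μ := volume.restrict (Ioo (0:ℝ) T) with hμ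
  have hμfin : volume (Ioo (0:ℝ) T) < ⊤ := by
    rw [Real.volume_Ioo]; exact ENNReal.ofReal_lt_top
  have hval : ∀ (b : ℝ) (t : Fin σ → ℝ), Monotone t →
      ∀ u : Lp ℝ p μ, ((u : ℝ → ℝ) =ᵐ[μ] switchFun σ b t) → ∀ i : Fin M,
      (B i - A i)⁻¹ * (∫ x in Ioo (A i) (B i), (u : ℝ → ℝ) x ∂μ)
        = (B i - A i)⁻¹ * (b * (B i - A i) + (1 - 2*b) *
            ∑ j : Fin σ, (-1:ℝ)^(j:ℕ) * (B i - clampR (A i) (B i) (t j))) := by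
    intro b t ht u hu i
    have hre : μ.restrict (Ioo (A i) (B i)) = volume.restrict (Ioo (A i) (B i)) := by
      rw [hμ, Measure.restrict_restrict measurableSet_Ioo,
        inter_eq_left.mpr (hsub i)]
    have hle : volume.restrict (Ioo (A i) (B i)) ≤ μ := hre ▸ Measure.restrict_le_self
    have h1 : (∫ x in Ioo (A i) (B i), (u : ℝ → ℝ) x ∂μ)
        = ∫ x in Ioo (A i) (B i), switchFun σ b t x := by
      rw [show (∫ x in Ioo (A i) (B i), (u : ℝ → ℝ) x ∂μ)
          = ∫ x, (u : ℝ → ℝ) x ∂(μ.restrict (Ioo (A i) (B i))) from rfl, hre]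
      exact integral_congr_ae (hu.filter_mono (ae_mono hle))
    rw [h1, integral_switch b t ht (hAB i)]
  have himg : ((fun u : Lp ℝ p μ =>
            fun i : Fin M => (B i - A i)⁻¹ *
              ∫ t in Ioo (A i) (B i), (u : ℝ → ℝ) t ∂μ) ''
          {u : Lp ℝ p μ |
            ∃ b : ℝ, (b = 0 ∨ b = 1) ∧ ∃ t : Fin σ → ℝ, Monotone t ∧
              t ∈ convexHull ℝ (F : Set (Fin σ → ℝ)) ∧
              (u : ℝ → ℝ) =ᵐ[μ] switchFun σ b t})
      = ⋃ (kr : Fin 2 × (Fin σ → Fin M → Fin 3)),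
          gfun A B ((kr.1 : ℕ) : ℝ) kr.2 ''
            (convexHull ℝ (F : Set (Fin σ → ℝ))
              ∩ {x | ∀ pc ∈ csList A B kr.2, pc.1 x ≤ pc.2}) := by
    ext v
    simp only [mem_image, mem_iUnion, mem_setOf_eq, mem_inter_iff]
    constructor
    · rintro ⟨u, ⟨b, hb, t, ht, htF, hu⟩, rfl⟩
      have hsat := satP_pat A B t ht
      refine ⟨((if b = 0 then (0 : Fin 2) else 1), pat A B t), t,
        ⟨htF, (satP_iff A B _ t).mpr hsat⟩, ?_⟩
      have hbb : ((((if b = 0 then (0 : Fin 2) else 1) : Fin 2) : ℕ) : ℝ) = b := by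
        rcases hb with rfl | rfl <;> norm_num
      funext i
      have hsum : ∀ j : Fin σ, (-1:ℝ)^(j:ℕ) * (B i - clampVal A B (pat A B t) t j i)
          = (-1:ℝ)^(j:ℕ) * (B i - clampR (A i) (B i) (t j)) := fun j => by
        rw [clampVal_eq A B _ t hsat hAB j i]
      rw [gfun_apply, hbb, Finset.sum_congr rfl (fun j _ => hsum j),
        ← hval b t ht u hu i]
    · rintro ⟨⟨k, r⟩, t, ⟨htF, htS⟩, rfl⟩
      have hsat := (satP_iff A B r t).mp htS
      have ht : Monotone t := hsat.1
      have hmem : MemLp (switchFun σ ((k : ℕ) : ℝ) t) p μ :=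
        switchFun_memLp _ _ p hμfin
      refine ⟨hmem.toLp _, ⟨((k : ℕ) : ℝ), ?_, t, ht, htF, hmem.coeFn_toLp⟩, ?_⟩
      · fin_cases k <;> norm_num
      · funext i
        have hsum : ∀ j : Fin σ, (-1:ℝ)^(j:ℕ) * (B i - clampVal A B r t j i)
            = (-1:ℝ)^(j:ℕ) * (B i - clampR (A i) (B i) (t j)) := fun j => by
          rw [clampVal_eq A B _ t hsat hAB j i]
        rw [gfun_apply, Finset.sum_congr rfl (fun j _ => hsum j),
          ← hval _ t ht (hmem.toLp _) hmem.coeFn_toLp i]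
  choose G hG using fun r : Fin σ → Fin M → Fin 3 =>
    convexHull_inter_halfspaces (E := Fin σ → ℝ) F (csList A B r)
  refine ⟨(Finset.univ : Finset (Fin 2 × (Fin σ → Fin M → Fin 3))).biUnion
    (fun kr => (G kr.2).image (gfun A B ((kr.1 : ℕ) : ℝ) kr.2)), ?_⟩
  rw [himg]
  have h2 : ∀ kr : Fin 2 × (Fin σ → Fin M → Fin 3),
      gfun A B ((kr.1 : ℕ) : ℝ) kr.2 ''
        (convexHull ℝ (F : Set (Fin σ → ℝ))
          ∩ {x | ∀ pc ∈ csList A B kr.2, pc.1 x ≤ pc.2})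
      = convexHull ℝ
          (((G kr.2).image (gfun A B ((kr.1 : ℕ) : ℝ) kr.2) : Finset (Fin M → ℝ))
            : Set (Fin M → ℝ)) := by
    intro kr
    rw [hG kr.2, gfun_image, Finset.coe_image]
  rw [iUnion_congr h2, convexHull_iUnion_hulls]
  congr 1
  rw [Finset.coe_biUnion]
  simp
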